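/- Let Ω ⊂ ℝⁿ be compact with Lebesgue measure μ(Ω), let f : ℝⁿ → ℝⁿ be continuous, and let γ > 0. Let H : ℝⁿ → ℝ be continuously differentiable with H(x) ≥ √γ for all x ∈ Ω and satisfying 2H(x)∇H(x)ᵀ f(x) ≤ −(H(x)² − γ) for all x ∈ Ω. Set M₁ := sup_{x∈Ω} ‖f(x)‖₂, M₂ := sup_{x∈Ω} |H(x)|, M₃ := sup_{x∈Ω} ‖∇H(x)‖₂, and assume √γ − M₁M₃ > 0. Let θ > 0 and choose 0 < δ < min{ (√γ − M₁M₃)/(M₁M₂ + M₁M₃ + M₂), √γ/M₂ } and 0 < σ < min{ 2(√γ − (M₁M₂ + M₁M₃ + M₂)δ − M₁M₃)/((2M₁+1)δ² + 2(1+M₁)δ + 1), 2(√γ − M₂δ)/(δ+1)², √θ/(√(2(μ(Ω)+1))(δ+1)), θ/(4M₂(δ+1)(μ(Ω)+1)) }. Suppose R : ℝⁿ → ℝ is continuously differentiable (e.g., a polynomial) with |H(x) − R(x)| < δσ and ‖∇H(x) − ∇R(x)‖₂ < δσ for all x ∈ Ω. Then G(x) := (R(x) − σ)² satisfies, for all x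 ∈ Ω: (1) ∇G(x)ᵀ f(x) < −(G(x) − γ); (2) G(x) < H(x)²; (3) H(x)² − G(x) < θ/(μ(Ω)+1). -/

import Mathlib

open Set Filter MeasureTheory Metric Topology

noncomputable section

set_option maxHeartbeats 1000000 in
/-- Pure real-number core of Statement 8. -/
lemma sos_key_estimates (γ θ δ σ M₁ M₂ M₃ V s h r a b c : ℝ)
    (hs : 0 < s)
    (hM1 : 0 ≤ M₁)
    (hsh : s ≤ h) (hhM2 : h ≤ M₂) (hsM2 : s ≤ M₂)
    (ha : |a| ≤ (M₃ + δ * σ) * M₁)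
    (hc : |c| ≤ δ * σ * M₁)
    (hcab : c = a - b)
    (hr : |h - r| < δ * σ)
    (hLie : 2 * h * b ≤ -(h ^ 2 - γ))
    (hδ0 : 0 < δ) (hδM2 : δ * M₂ < s)
    (hσ0 : 0 < σ)
    (hσ1 : σ * ((2 * M₁ + 1) * δ ^ 2 + 2 * (1 + M₁) * δ + 1)
      < 2 * (s - (M₁ * M₂ + M₁ * M₃ + M₂) * δ - M₁ * M₃))
    (hσ2 : σ * (δ + 1) ^ 2 < 2 * (s - M₂ * δ))
    (hσ3 : σ ^ 2 * ((δ + 1) ^ 2 * (2 * (V + 1))) < θ)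
    (hσ4 : σ * (4 * M₂ * (δ + 1) * (V + 1)) < θ)
    (hV : 0 ≤ V) :
    2 * (r - σ) * a < -((r - σ) ^ 2 - γ) ∧
    (r - σ) ^ 2 < h ^ 2 ∧
    h ^ 2 - (r - σ) ^ 2 < θ / (V + 1) := by
  have habs := abs_le.1 ha
  have hcabs := abs_le.1 hc
  have hrabs := abs_lt.1 hr
  have hM2 : 0 < M₂ := lt_of_lt_of_le hs hsM2
  have hδ1 : δ < 1 := by nlinarith [mul_pos hδ0 hM2]
  have hf1 : (1 - δ) * σ < h - r + σ := by linarith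
  have hf1' : h - r + σ < (δ + 1) * σ := by linarith
  have hf2 : 2 * s - (δ + 1) * σ < h + r - σ := by nlinarith [mul_nonneg hσ0.le hδ0.le]
  have hf2' : h + r - σ < 2 * M₂ + δ * σ := by linarith
  have hf2pos : 0 < 2 * s - (δ + 1) * σ := by
    nlinarith [mul_nonneg hσ0.le hδ0.le, mul_pos hδ0 hM2,
      mul_nonneg (mul_nonneg hσ0.le hδ0.le) hδ0.le]
  have hf1pos : 0 < (1 - δ) * σ := by nlinarith [mul_pos hσ0 hM2]
  have e : (h - r + σ) * (h + r - σ) = h ^ 2 - (r - σ) ^ 2 := by ring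
  have hdiff : (1 - δ) * σ * (2 * s - (δ + 1) * σ) < h ^ 2 - (r - σ) ^ 2 := by
    have h1 := mul_lt_mul'' hf1 hf2 hf1pos.le hf2pos.le
    linarith [h1, e.ge, e.le]
  refine ⟨?_, ?_, ?_⟩
  · have key : 2 * (r - σ) * a - 2 * h * b = 2 * (r - σ - h) * a + 2 * h * c := by
      rw [hcab]; ring
    have habs1 : |r - σ - h| ≤ (δ + 1) * σ := by
      rw [abs_le]; constructor <;> nlinarith
    have hA : 2 * (r - σ - h) * a ≤ 2 * ((δ + 1) * σ * ((M₃ + δ * σ) * M₁)) := by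
      have h1 : (r - σ - h) * a ≤ |r - σ - h| * |a| := by
        calc (r - σ - h) * a ≤ |(r - σ - h) * a| := le_abs_self _
        _ = |r - σ - h| * |a| := abs_mul _ _
      have h2 : |r - σ - h| * |a| ≤ (δ + 1) * σ * ((M₃ + δ * σ) * M₁) :=
        mul_le_mul habs1 ha (abs_nonneg a) (by positivity)
      linarith
    have hB : 2 * h * c ≤ 2 * (M₂ * (δ * σ * M₁)) := by
      have h0 : (0:ℝ) ≤ h := le_trans hs.le hsh
      have h1 : h * c ≤ h * (δ * σ * M₁) := mul_le_mul_of_nonneg_left hcabs.2 h0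
      have h2 : h * (δ * σ * M₁) ≤ M₂ * (δ * σ * M₁) :=
        mul_le_mul_of_nonneg_right hhM2 (by positivity)
      linarith
    have hstep : 2 * (δ + 1) * ((M₃ + δ * σ) * M₁) + 2 * M₂ * (δ * M₁)
        < (1 - δ) * (2 * s - (δ + 1) * σ) := by
      nlinarith [mul_nonneg hδ0.le (sub_nonneg.2 hsM2), mul_nonneg hσ0.le hδ0.le,
        mul_nonneg (mul_nonneg hσ0.le hδ0.le) hδ0.le]
    have hmul := mul_lt_mul_of_pos_left hstep hσ0
    nlinarith [key, hA, hB, hdiff, hmul, hLie]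
  · linarith [hdiff, mul_pos hf1pos hf2pos]
  · have hV1 : (0:ℝ) < V + 1 := by linarith
    rw [lt_div_iff₀ hV1]
    have hub : h ^ 2 - (r - σ) ^ 2 < (δ + 1) * σ * (2 * M₂ + δ * σ) := by
      have h1 := mul_lt_mul'' hf1' hf2' (by linarith [hf1pos] : (0:ℝ) ≤ h - r + σ)
        (by linarith [hf2pos] : (0:ℝ) ≤ h + r - σ)
      linarith [h1, e.ge, e.le]
    have h2 := mul_lt_mul_of_pos_right hub hV1
    nlinarith [h2, hσ3, hσ4,
      mul_nonneg (mul_nonneg (mul_nonneg hσ0.le hσ0.le) (by linarith : (0:ℝ) ≤ δ + 1)) hV1.le]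


/-- core estimates in Part 2 of the proof of Thm. 7: given the Lyapunov-type
inequality `2H(x)∇H(x)ᵀf(x) ≤ −(H(x)² − γ)` on a compact set `Ω`, sup-bounds `M₁, M₂, M₃`,
and parameters `θ, δ, σ` chosen within the prescribed ranges, any `C¹` function `R`
approximating `H` and `∇H` to accuracy `δσ` on `Ω` yields `G(x) := (R(x) − σ)²` with
`∇G(x)ᵀf(x) < −(G(x) − γ)`, `G(x) < H(x)²`, and `H(x)² − G(x) < θ/(μ(Ω)+1)` on `Ω`. -/
theorem sos_squared_approximation_estimates {n : ℕ}
    (Ω : Set (EuclideanSpace ℝ (Fin n)))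
    (f : EuclideanSpace ℝ (Fin n) → EuclideanSpace ℝ (Fin n))
    (H R : EuclideanSpace ℝ (Fin n) → ℝ)
    (γ θ δ σ M₁ M₂ M₃ : ℝ)
    (hΩ : IsCompact Ω) (hf : Continuous f) (hγ : 0 < γ)
    (hH : ContDiff ℝ 1 H)
    (hHlb : ∀ x ∈ Ω, Real.sqrt γ ≤ H x)
    (hLie : ∀ x ∈ Ω, 2 * H x * (inner ℝ (gradient H x) (f x) : ℝ) ≤ -(H x ^ 2 - γ))
    (hM1 : M₁ = sSup ((fun x => ‖f x‖) '' Ω))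
    (hM2 : M₂ = sSup ((fun x => |H x|) '' Ω))
    (hM3 : M₃ = sSup ((fun x => ‖gradient H x‖) '' Ω))
    (hpos : 0 < Real.sqrt γ - M₁ * M₃)
    (hθ : 0 < θ)
    (hδ0 : 0 < δ)
    (hδ1 : δ < (Real.sqrt γ - M₁ * M₃) / (M₁ * M₂ + M₁ * M₃ + M₂))
    (hδ2 : δ < Real.sqrt γ / M₂)
    (hσ0 : 0 < σ)
    (hσ1 : σ < 2 * (Real.sqrt γ - (M₁ * M₂ + M₁ * M₃ + M₂) * δ - M₁ * M₃) /
      ((2 * M₁ + 1) * δ ^ 2 + 2 * (1 + M₁) * δ + 1))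
    (hσ2 : σ < 2 * (Real.sqrt γ - M₂ * δ) / (δ + 1) ^ 2)
    (hσ3 : σ < Real.sqrt θ /
      (Real.sqrt (2 * ((MeasureTheory.volume Ω).toReal + 1)) * (δ + 1)))
    (hσ4 : σ < θ / (4 * M₂ * (δ + 1) * ((MeasureTheory.volume Ω).toReal + 1)))
    (hR : ContDiff ℝ 1 R)
    (hRapprox : ∀ x ∈ Ω, |H x - R x| < δ * σ)
    (hRgrad : ∀ x ∈ Ω, ‖gradient H x - gradient R x‖ < δ * σ) :
    ∀ x ∈ Ω,
      (inner ℝ (gradient (fun y => (R y - σ) ^ 2) x) (f x) : ℝ) < -((R x - σ) ^ 2 - γ) ∧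
      (R x - σ) ^ 2 < H x ^ 2 ∧
      H x ^ 2 - (R x - σ) ^ 2 < θ / ((MeasureTheory.volume Ω).toReal + 1) := by
  have hgc : Continuous (fun x => gradient H x) := by
    simp only [gradient]
    exact (InnerProductSpace.toDual ℝ _).symm.continuous.comp (hH.continuous_fderiv one_ne_zero)
  intro x hx
  set V : ℝ := (MeasureTheory.volume Ω).toReal with hVdef
  have hV : 0 ≤ V := ENNReal.toReal_nonneg
  have hV1 : (0:ℝ) < V + 1 := by linarith
  -- sup bounds
  have hbf : ‖f x‖ ≤ M₁ := hM1 ▸ le_csSup (hΩ.image hf.norm).bddAbove (mem_image_of_mem _ hx)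
  have hbH : |H x| ≤ M₂ := hM2 ▸ le_csSup (hΩ.image hH.continuous.abs).bddAbove (mem_image_of_mem _ hx)
  have hbg : ‖gradient H x‖ ≤ M₃ := hM3 ▸ le_csSup (hΩ.image hgc.norm).bddAbove (mem_image_of_mem _ hx)
  have hM1nn : 0 ≤ M₁ := le_trans (norm_nonneg _) hbf
  have hM3nn : 0 ≤ M₃ := le_trans (norm_nonneg _) hbg
  set s : ℝ := Real.sqrt γ with hsdef
  have hs : 0 < s := Real.sqrt_pos.2 hγ
  have hsh : s ≤ H x := hHlb x hx
  have hhM2 : H x ≤ M₂ := le_trans (le_abs_self _) hbH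
  have hsM2 : s ≤ M₂ := hsh.trans hhM2
  have hM2pos : 0 < M₂ := lt_of_lt_of_le hs hsM2
  -- gradient of (R - σ)^2
  have hRg : HasGradientAt R (gradient R x) x :=
    ((hR.differentiable one_ne_zero) x).hasGradientAt
  have hF := hRg.hasFDerivAt
  have hFm := (hF.sub_const σ).mul (hF.sub_const σ)
  have h2 : HasFDerivAt (fun y => (R y - σ) ^ 2)
      ((2 * (R x - σ)) • (InnerProductSpace.toDual ℝ _ (gradient R x))) x := by
    have he : (fun y => (R y - σ) ^ 2) = (fun y => (R y - σ) * (R y - σ)) := by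
      funext y; ring
    rw [he]
    refine hFm.congr_fderiv ?_
    rw [two_mul, add_smul]
  have hgradG : gradient (fun y => (R y - σ) ^ 2) x = (2 * (R x - σ)) • gradient R x := by
    rw [(hasFDerivAt_iff_hasGradientAt.1 h2).gradient]
    simp
    rfl
  -- inner product bounds
  set a : ℝ := inner ℝ (gradient R x) (f x) with hadef
  set b : ℝ := inner ℝ (gradient H x) (f x) with hbdef
  set c : ℝ := inner ℝ (gradient R x - gradient H x) (f x) with hcdef
  have hcab : c = a - b := by rw [hcdef, inner_sub_left]
  have hgRnorm : ‖gradient R x‖ ≤ M₃ + δ * σ := by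
    have h1 := norm_sub_norm_le (gradient R x) (gradient H x)
    rw [norm_sub_rev] at h1
    linarith [hRgrad x hx]
  have ha : |a| ≤ (M₃ + δ * σ) * M₁ := by
    calc |a| ≤ ‖gradient R x‖ * ‖f x‖ := abs_real_inner_le_norm _ _
    _ ≤ (M₃ + δ * σ) * M₁ := mul_le_mul hgRnorm hbf (norm_nonneg _) (by positivity)
  have hc : |c| ≤ δ * σ * M₁ := by
    calc |c| ≤ ‖gradient R x - gradient H x‖ * ‖f x‖ := abs_real_inner_le_norm _ _
    _ ≤ δ * σ * M₁ := by
        refine mul_le_mul ?_ hbf (norm_nonneg _) (by positivity)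
        rw [← norm_sub_rev]
        exact (hRgrad x hx).le
  -- parameter conversions
  have hδM2 : δ * M₂ < s := (lt_div_iff₀ hM2pos).1 hδ2
  have hD : (0:ℝ) < (2 * M₁ + 1) * δ ^ 2 + 2 * (1 + M₁) * δ + 1 := by positivity
  have hσ1' : σ * ((2 * M₁ + 1) * δ ^ 2 + 2 * (1 + M₁) * δ + 1)
      < 2 * (s - (M₁ * M₂ + M₁ * M₃ + M₂) * δ - M₁ * M₃) := (lt_div_iff₀ hD).1 hσ1
  have hσ2' : σ * (δ + 1) ^ 2 < 2 * (s - M₂ * δ) :=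
    (lt_div_iff₀ (by positivity)).1 hσ2
  have ht : (0:ℝ) < Real.sqrt (2 * (V + 1)) * (δ + 1) := by
    have : (0:ℝ) < Real.sqrt (2 * (V + 1)) := Real.sqrt_pos.2 (by linarith)
    positivity
  have hσ3' : σ ^ 2 * ((δ + 1) ^ 2 * (2 * (V + 1))) < θ := by
    have hst : σ * (Real.sqrt (2 * (V + 1)) * (δ + 1)) < Real.sqrt θ :=
      (lt_div_iff₀ ht).1 hσ3
    have hsq : (σ * (Real.sqrt (2 * (V + 1)) * (δ + 1))) ^ 2 < (Real.sqrt θ) ^ 2 := by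
      apply pow_lt_pow_left₀ hst (by positivity) two_ne_zero
    calc σ ^ 2 * ((δ + 1) ^ 2 * (2 * (V + 1)))
        = (σ * (Real.sqrt (2 * (V + 1)) * (δ + 1))) ^ 2 := by
          rw [mul_pow, mul_pow, Real.sq_sqrt (by positivity)]; ring
      _ < (Real.sqrt θ) ^ 2 := hsq
      _ = θ := Real.sq_sqrt hθ.le
  have hσ4' : σ * (4 * M₂ * (δ + 1) * (V + 1)) < θ :=
    (lt_div_iff₀ (by positivity)).1 hσ4
  obtain ⟨k1, k2, k3⟩ := sos_key_estimates γ θ δ σ M₁ M₂ M₃ V s (H x) (R x) a b c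
    hs hM1nn hsh hhM2 hsM2 ha hc hcab (hRapprox x hx) (hLie x hx) hδ0 hδM2 hσ0
    hσ1' hσ2' hσ3' hσ4' hV
  refine ⟨?_, k2, k3⟩
  rw [hgradG, real_inner_smul_left]
  exact k1
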